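/- Let N ≥ 1 and let t_1, …, t_N ∈ ℝ be points such that exp(i t_1), …, exp(i t_N) are pairwise distinct, and let z_1, …, z_N and z'_1, …, z'_N be arbitrary real numbers. Then there exists a real trigonometric polynomial H of degree at most N such that H(t_i) = z_i and H'(t_i) = z'_i for every i = 1, …, N. -/

import Mathlib

open Finset Complex Real

/-- `F` is (the coercion of) a complex trigonometric polynomial of degree `≤ n`. -/
def IsTP (n : ℕ) (F : ℝ → ℂ) : Prop :=
  ∃ c : ℤ → ℂ, ∀ x : ℝ, F x = ∑ k ∈ Finset.Icc (-(n:ℤ)) n, c k * Complex.exp (Complex.I * k * x)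

theorem IsTP.congr {n : ℕ} {F G : ℝ → ℂ} (h : IsTP n F) (hFG : ∀ x, F x = G x) : IsTP n G := by
  obtain ⟨c, hc⟩ := h
  exact ⟨c, fun x => (hFG x) ▸ hc x⟩

theorem IsTP.mono {m n : ℕ} (hmn : m ≤ n) {F : ℝ → ℂ} (h : IsTP m F) : IsTP n F := by
  obtain ⟨c, hc⟩ := h
  refine ⟨fun k => if k ∈ Finset.Icc (-(m:ℤ)) m then c k else 0, fun x => ?_⟩
  have hsub : Finset.Icc (-(m:ℤ)) m ⊆ Finset.Icc (-(n:ℤ)) n :=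
    Finset.Icc_subset_Icc (by omega) (by omega)
  calc F x = ∑ k ∈ Finset.Icc (-(m:ℤ)) m, c k * Complex.exp (Complex.I * k * x) := hc x
    _ = ∑ k ∈ Finset.Icc (-(m:ℤ)) m,
        (if k ∈ Finset.Icc (-(m:ℤ)) m then c k else 0) * Complex.exp (Complex.I * k * x) :=
      Finset.sum_congr rfl fun k hk => by rw [if_pos hk]
    _ = _ := Finset.sum_subset hsub fun k _ hk => by rw [if_neg hk, zero_mul]

theorem isTP_const (n : ℕ) (a : ℂ) : IsTP n (fun _ => a) := by
  refine IsTP.mono (Nat.zero_le n) ⟨fun _ => a, fun x => ?_⟩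
  simp

theorem IsTP.add {n : ℕ} {F G : ℝ → ℂ} (hF : IsTP n F) (hG : IsTP n G) :
    IsTP n (fun x => F x + G x) := by
  obtain ⟨c, hc⟩ := hF
  obtain ⟨d, hd⟩ := hG
  refine ⟨fun k => c k + d k, fun x => ?_⟩
  show F x + G x = _
  rw [hc x, hd x, ← Finset.sum_add_distrib]
  exact Finset.sum_congr rfl fun k _ => by ring

theorem IsTP.mul {m n : ℕ} {F G : ℝ → ℂ} (hF : IsTP m F) (hG : IsTP n G) :
    IsTP (m + n) (fun x => F x * G x) := by
  obtain ⟨c, hc⟩ := hF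
  obtain ⟨d, hd⟩ := hG
  classical
  refine ⟨fun k => ∑ p ∈ (Finset.Icc (-(m:ℤ)) m ×ˢ Finset.Icc (-(n:ℤ)) n).filter
      (fun p => p.1 + p.2 = k), c p.1 * d p.2, fun x => ?_⟩
  show F x * G x = _
  rw [hc x, hd x, Finset.sum_mul_sum, ← Finset.sum_product']
  have key : ∀ p : ℤ × ℤ, c p.1 * Complex.exp (Complex.I * p.1 * x) *
      (d p.2 * Complex.exp (Complex.I * p.2 * x)) =
      c p.1 * d p.2 * Complex.exp (Complex.I * ((p.1 + p.2 : ℤ) : ℂ) * x) := by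
    intro p
    rw [show (Complex.I * ((p.1 + p.2 : ℤ) : ℂ) * x) =
        Complex.I * p.1 * x + Complex.I * p.2 * x by push_cast; ring, Complex.exp_add]
    ring
  rw [Finset.sum_congr rfl fun p _ => key p]
  rw [← Finset.sum_fiberwise_of_maps_to (g := fun p : ℤ × ℤ => p.1 + p.2)
      (t := Finset.Icc (-((m + n : ℕ) : ℤ)) ((m + n : ℕ) : ℤ))
      (fun p hp => by
        simp only [Finset.mem_product, Finset.mem_Icc] at hp ⊢
        push_cast
        omega)
      (fun p => c p.1 * d p.2 * Complex.exp (Complex.I * ((p.1 + p.2 : ℤ) : ℂ) * x))]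
  refine Finset.sum_congr rfl fun k _ => ?_
  rw [Finset.sum_mul]
  refine Finset.sum_congr rfl fun p hp => ?_
  simp only [Finset.mem_filter] at hp
  rw [hp.2]

theorem IsTP.const_mul {n : ℕ} {F : ℝ → ℂ} (hF : IsTP n F) (a : ℂ) :
    IsTP n (fun x => a * F x) := by
  have := (isTP_const 0 a).mul hF
  simpa using this

theorem IsTP.sum {ι : Type*} {n : ℕ} {S : Finset ι} {f : ι → ℝ → ℂ}
    (h : ∀ i ∈ S, IsTP n (f i)) : IsTP n (fun x => ∑ i ∈ S, f i x) := by
  classical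
  induction S using Finset.induction_on with
  | empty => exact (isTP_const n 0).congr (by simp)
  | insert a s hx ih =>
    have := (h a (Finset.mem_insert_self a s)).add (ih fun i hi => h i (Finset.mem_insert_of_mem hi))
    exact this.congr fun x => by rw [Finset.sum_insert hx]

theorem IsTP.prod {ι : Type*} {S : Finset ι} {f : ι → ℝ → ℂ}
    (h : ∀ i ∈ S, IsTP 1 (f i)) : IsTP S.card (fun x => ∏ i ∈ S, f i x) := by
  classical
  induction S using Finset.induction_on with
  | empty => exact (isTP_const 0 1).congr (by simp)
  | insert a s hx ih =>
    have := (h a (Finset.mem_insert_self a s)).mul (ih fun i hi => h i (Finset.mem_insert_of_mem hi))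
    rw [Finset.card_insert_of_notMem hx]
    refine (this.mono (by omega)).congr fun x => by rw [Finset.prod_insert hx]

theorem isTP_cos (a : ℝ) : IsTP 1 (fun x => ((Real.cos (x - a) : ℝ) : ℂ)) := by
  refine ⟨fun k => if k = 1 then Complex.exp (-(Complex.I * a)) / 2
      else if k = -1 then Complex.exp (Complex.I * a) / 2 else 0, fun x => ?_⟩
  have h1 : Finset.Icc (-1 : ℤ) 1 = {-1, 0, 1} := by decide
  rw [show ((1:ℕ):ℤ) = 1 by norm_num, h1]
  rw [Finset.sum_insert (by decide), Finset.sum_insert (by decide), Finset.sum_singleton]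
  norm_num
  have h := Complex.two_cos ((x : ℂ) - a)
  have e1 : Complex.exp (((x:ℂ) - a) * Complex.I) = Complex.exp (I * x) * Complex.exp (-(I * a)) := by
    rw [← Complex.exp_add]; congr 1; ring
  have e2 : Complex.exp (-((x:ℂ) - a) * Complex.I) = Complex.exp (-(I * x)) * Complex.exp (I * a) := by
    rw [← Complex.exp_add]; congr 1; ring
  linear_combination h / 2 + e1 / 2 + e2 / 2

theorem isTP_sin (a : ℝ) : IsTP 1 (fun x => ((Real.sin (x - a) : ℝ) : ℂ)) := by
  refine ⟨fun k => if k = 1 then Complex.exp (-(Complex.I * a)) / (2 * Complex.I)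
      else if k = -1 then -(Complex.exp (Complex.I * a)) / (2 * Complex.I) else 0, fun x => ?_⟩
  have h1 : Finset.Icc (-1 : ℤ) 1 = {-1, 0, 1} := by decide
  rw [show ((1:ℕ):ℤ) = 1 by norm_num, h1]
  rw [Finset.sum_insert (by decide), Finset.sum_insert (by decide), Finset.sum_singleton]
  norm_num
  have h := Complex.two_sin ((x : ℂ) - a)
  have e1 : Complex.exp (((x:ℂ) - a) * Complex.I) = Complex.exp (I * x) * Complex.exp (-(I * a)) := by
    rw [← Complex.exp_add]; congr 1; ring
  have e2 : Complex.exp (-((x:ℂ) - a) * Complex.I) = Complex.exp (-(I * x)) * Complex.exp (I * a) := by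
    rw [← Complex.exp_add]; congr 1; ring
  simp only [div_eq_mul_inv, mul_inv, Complex.inv_I]
  linear_combination h / 2 + Complex.I / 2 * e2 - Complex.I / 2 * e1

theorem isTP_sin_sq_half (a : ℝ) :
    IsTP 1 (fun x => ((Real.sin ((x - a) / 2) ^ 2 : ℝ) : ℂ)) := by
  have h := (isTP_const 1 ((1:ℂ)/2)).add ((isTP_cos a).const_mul (-(1/2)))
  refine h.congr fun x => ?_
  have : Real.sin ((x - a) / 2) ^ 2 = 1/2 - Real.cos (x - a) / 2 := by
    rw [Real.sin_sq_eq_half_sub, show 2 * ((x - a) / 2) = x - a by ring]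
  rw [this]
  push_cast
  ring

/-- Extract real cosine/sine coefficients from a complex exponential representation of a
real-valued function. -/
theorem IsTP.exists_coeffs {n : ℕ} {H : ℝ → ℝ} (h : IsTP n (fun x => ((H x : ℝ) : ℂ))) :
    ∃ a b : ℕ → ℝ, ∀ x : ℝ,
      H x = a 0 + ∑ k ∈ Finset.Icc 1 n, (a k * Real.cos (k * x) + b k * Real.sin (k * x)) := by
  obtain ⟨c, hc⟩ := h
  refine ⟨fun k => if k = 0 then (c 0).re else (c (k:ℤ)).re + (c (-(k:ℤ))).re,
    fun k => (c (-(k:ℤ))).im - (c (k:ℤ)).im, fun x => ?_⟩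
  have hre : H x = (((H x : ℝ) : ℂ)).re := by simp
  have hterm : ∀ k : ℤ, (c k * Complex.exp (Complex.I * k * x)).re =
      (c k).re * Real.cos ((k:ℝ) * x) - (c k).im * Real.sin ((k:ℝ) * x) := by
    intro k
    have hE : Complex.exp (Complex.I * k * x) =
        ((Real.cos ((k:ℝ) * x) : ℝ) : ℂ) + ((Real.sin ((k:ℝ) * x) : ℝ) : ℂ) * Complex.I := by
      rw [show (Complex.I * (k:ℂ) * x) = ((((k:ℝ) * x : ℝ)) : ℂ) * Complex.I by push_cast; ring,
        Complex.exp_mul_I, Complex.ofReal_cos, Complex.ofReal_sin]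
    rw [hE]
    simp only [Complex.add_re, Complex.add_im, Complex.mul_re, Complex.mul_im,
      Complex.ofReal_re, Complex.ofReal_im, Complex.I_re, Complex.I_im]
    ring
  have hcx : ((H x : ℝ) : ℂ) = ∑ k ∈ Finset.Icc (-(n:ℤ)) n,
      c k * Complex.exp (Complex.I * k * x) := hc x
  rw [hre, hcx, Complex.re_sum]
  rw [Finset.sum_congr rfl fun k _ => hterm k]
  have hsplit : Finset.Icc (-(n:ℤ)) n =
      insert 0 (Finset.Icc (-(n:ℤ)) (-1) ∪ Finset.Icc 1 n) := by
    ext k; simp only [Finset.mem_Icc, Finset.mem_insert, Finset.mem_union]; omega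
  rw [hsplit, Finset.sum_insert (by simp only [Finset.mem_union, Finset.mem_Icc]; omega),
    Finset.sum_union (by
      rw [Finset.disjoint_left]
      intro k hk hk'
      simp only [Finset.mem_Icc] at hk hk'
      omega)]
  have himg : Finset.Icc (-(n:ℤ)) (-1) = (Finset.Icc (1:ℤ) n).image (fun k => -k) := by
    ext k
    simp only [Finset.mem_Icc, Finset.mem_image]
    constructor
    · intro hk; exact ⟨-k, by omega, by omega⟩
    · rintro ⟨m, hm, rfl⟩; omega
  rw [himg, Finset.sum_image (by intro a _ b _ hab; simp at hab; omega), ← Finset.sum_add_distrib]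
  have hcast : Finset.Icc (1:ℤ) n = (Finset.Icc 1 n : Finset ℕ).image (fun k : ℕ => (k:ℤ)) := by
    ext k
    simp only [Finset.mem_Icc, Finset.mem_image]
    constructor
    · intro hk
      refine ⟨k.toNat, ⟨by omega, by omega⟩, by omega⟩
    · rintro ⟨m, hm, rfl⟩
      omega
  rw [hcast, Finset.sum_image (by intro a _ b _ hab; simp at hab; omega)]
  have h0 : (((0:ℤ):ℝ)) = 0 := by norm_num
  congr 1
  · rw [h0, zero_mul, Real.cos_zero, Real.sin_zero]
    simp
  · refine Finset.sum_congr rfl fun k hk => ?_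
    simp only [Finset.mem_Icc] at hk
    have hk0 : k ≠ 0 := by omega
    have hcos : Real.cos (((-(k:ℤ) : ℤ):ℝ) * x) = Real.cos ((k:ℝ) * x) := by
      push_cast; rw [neg_mul, Real.cos_neg]
    have hsin : Real.sin (((-(k:ℤ) : ℤ):ℝ) * x) = -Real.sin ((k:ℝ) * x) := by
      push_cast; rw [neg_mul, Real.sin_neg]
    rw [hcos, hsin]
    simp only [if_neg hk0]
    push_cast
    ring

/-- trigonometric Hermite interpolation. Given `N ≥ 1` points
`t_1, …, t_N` that are pairwise distinct modulo `2π`, and arbitrary prescribed values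
`z_i` and derivative values `z'_i`, there is a real trigonometric polynomial `H` of
degree at most `N` with `H(t_i) = z_i` and `H'(t_i) = z'_i` for all `i`. -/
theorem trig_hermite_interpolation (N : ℕ) (hN : 1 ≤ N) (t : Fin N → ℝ)
    (ht : Function.Injective fun i => Complex.exp (Complex.I * (t i : ℂ)))
    (z z' : Fin N → ℝ) :
    ∃ H : ℝ → ℝ,
      (∃ a b : ℕ → ℝ, ∀ x : ℝ,
        H x = a 0 + ∑ k ∈ Finset.Icc 1 N, (a k * Real.cos (k * x) + b k * Real.sin (k * x))) ∧
      ∀ i, H (t i) = z i ∧ deriv H (t i) = z' i := by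
  classical
  -- the sines of half the differences are nonzero
  have hdne : ∀ i j : Fin N, i ≠ j → Real.sin ((t i - t j) / 2) ≠ 0 := by
    intro i j hij h0
    obtain ⟨n, hn⟩ := Real.sin_eq_zero_iff.1 h0
    apply hij
    apply ht
    show Complex.exp (Complex.I * (t i : ℂ)) = Complex.exp (Complex.I * (t j : ℂ))
    have hti : (t i : ℂ) = (t j : ℂ) + (n : ℂ) * (2 * Real.pi) := by
      have : t i = t j + (n : ℝ) * (2 * Real.pi) := by linarith
      exact_mod_cast this
    rw [hti, mul_add, Complex.exp_add,
      show Complex.I * ((n:ℂ) * (2 * (Real.pi:ℂ))) = (n:ℂ) * (2 * (Real.pi:ℂ) * Complex.I) by ring,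
      Complex.exp_int_mul_two_pi_mul_I, mul_one]
  -- Lagrange-type basis
  set l : Fin N → ℝ → ℝ :=
    fun i x => ∏ j ∈ Finset.univ.erase i, (Real.sin ((x - t j) / 2) / Real.sin ((t i - t j) / 2))
    with hldef
  set g : Fin N → ℝ → ℝ := fun i x => l i x ^ 2 with hgdef
  have hldiff : ∀ i, Differentiable ℝ (l i) := by
    intro i
    apply Differentiable.fun_finset_prod
    intro j _
    exact (Real.differentiable_sin.comp ((differentiable_id.sub_const _).div_const 2)).div_const _
  have hgdiff : ∀ i, Differentiable ℝ (g i) := fun i => (hldiff i).pow 2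
  have hl_self : ∀ i, l i (t i) = 1 := by
    intro i
    rw [hldef]
    refine Finset.prod_eq_one fun j hj => ?_
    have hij : i ≠ j := (Finset.ne_of_mem_erase hj).symm
    exact div_self (hdne i j hij)
  have hl_zero : ∀ i j, j ≠ i → l i (t j) = 0 := by
    intro i j hji
    rw [hldef]
    refine Finset.prod_eq_zero (Finset.mem_erase.2 ⟨hji, Finset.mem_univ j⟩) ?_
    simp
  have hg_self : ∀ i, g i (t i) = 1 := by
    intro i; rw [hgdef]; simp [hl_self i]
  have hg_zero : ∀ i j, j ≠ i → g i (t j) = 0 := by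
    intro i j hji; rw [hgdef]; simp [hl_zero i j hji]
  have hDg : ∀ i x, HasDerivAt (g i) ((2:ℝ) * l i x * deriv (l i) x) x := by
    intro i x
    have := ((hldiff i x).hasDerivAt).pow 2
    simp at this; exact this
  have hDg_zero : ∀ i j, j ≠ i → deriv (g i) (t j) = 0 := by
    intro i j hji
    rw [(hDg i (t j)).deriv, hl_zero i j hji, mul_zero, zero_mul]
  set c : Fin N → ℝ := fun i => deriv (g i) (t i) with hcdef
  -- derivative of `sin (x − a)`
  have hsin : ∀ (a x : ℝ), HasDerivAt (fun y => Real.sin (y - a)) (Real.cos (x - a)) x := by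
    intro a x
    have := (Real.hasDerivAt_sin (x - a)).comp x ((hasDerivAt_id x).sub_const a)
    simp at this; exact this
  set H : ℝ → ℝ := fun x => ∑ i, (z i * (g i x * (1 - c i * Real.sin (x - t i))) +
      z' i * (g i x * Real.sin (x - t i))) with hHdef
  have hint : ∀ j, H (t j) = z j := by
    intro j
    have h1 : ∀ i ∈ Finset.univ, i ≠ j →
        (z i * (g i (t j) * (1 - c i * Real.sin (t j - t i))) +
          z' i * (g i (t j) * Real.sin (t j - t i))) = 0 := by
      intro i _ hij
      rw [hg_zero i j hij.symm]
      ring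
    simp only [hHdef]
    rw [Finset.sum_eq_single j h1 (fun h => absurd (Finset.mem_univ j) h)]
    rw [hg_self j, sub_self, Real.sin_zero]
    ring
  have hderiv : ∀ j, deriv H (t j) = z' j := by
    intro j
    have hDA : HasDerivAt H (∑ i, (z i * (deriv (g i) (t j) * (1 - c i * Real.sin (t j - t i)) +
        g i (t j) * -(c i * Real.cos (t j - t i))) +
        z' i * (deriv (g i) (t j) * Real.sin (t j - t i) + g i (t j) * Real.cos (t j - t i)))) (t j) := by
      rw [hHdef]
      refine HasDerivAt.fun_sum fun i _ => ?_
      have hg' : HasDerivAt (g i) (deriv (g i) (t j)) (t j) := (hgdiff i (t j)).hasDerivAt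
      have h1 : HasDerivAt (fun y => 1 - c i * Real.sin (y - t i))
          (-(c i * Real.cos (t j - t i))) (t j) := by
        have := ((hsin (t i) (t j)).const_mul (c i)).const_sub 1
        simpa using this
      exact ((hg'.mul h1).const_mul (z i)).add ((hg'.mul (hsin (t i) (t j))).const_mul (z' i))
    rw [hDA.deriv]
    have h1 : ∀ i ∈ Finset.univ, i ≠ j →
        (z i * (deriv (g i) (t j) * (1 - c i * Real.sin (t j - t i)) +
          g i (t j) * -(c i * Real.cos (t j - t i))) +
          z' i * (deriv (g i) (t j) * Real.sin (t j - t i) + g i (t j) * Real.cos (t j - t i))) = 0 := by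
      intro i _ hij
      rw [hg_zero i j hij.symm, hDg_zero i j hij.symm]
      ring
    rw [Finset.sum_eq_single j h1 (fun h => absurd (Finset.mem_univ j) h)]
    rw [hg_self j, sub_self, Real.sin_zero, Real.cos_zero]
    have : deriv (g j) (t j) = c j := rfl
    rw [this]
    ring
  refine ⟨H, ?_, fun j => ⟨hint j, hderiv j⟩⟩
  -- coefficients
  have hgC : ∀ i, IsTP (N - 1) (fun x => ((g i x : ℝ) : ℂ)) := by
    intro i
    have hcard : (Finset.univ.erase i).card = N - 1 := by
      rw [Finset.card_erase_of_mem (Finset.mem_univ i), Finset.card_univ, Fintype.card_fin]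
    have hprod := IsTP.prod (S := Finset.univ.erase i)
      (f := fun j x => (((Real.sin ((t i - t j) / 2) ^ 2)⁻¹ : ℝ) : ℂ) *
        ((Real.sin ((x - t j) / 2) ^ 2 : ℝ) : ℂ))
      (fun j _ => (isTP_sin_sq_half (t j)).const_mul _)
    rw [hcard] at hprod
    refine hprod.congr fun x => ?_
    rw [hgdef, hldef]
    push_cast
    rw [← Finset.prod_pow]
    apply Finset.prod_congr rfl
    intro j hj
    rw [div_pow, div_eq_mul_inv]
    ring
  have hsum : IsTP N (fun x => ∑ i, ((z i : ℂ) *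
      ((fun x => ((g i x : ℝ) : ℂ)) x * (1 - (c i : ℂ) * ((Real.sin (x - t i) : ℝ) : ℂ))) +
      (z' i : ℂ) * ((fun x => ((g i x : ℝ) : ℂ)) x * ((Real.sin (x - t i) : ℝ) : ℂ)))) := by
    refine IsTP.sum fun i _ => ?_
    have haff : IsTP 1 (fun x => 1 - (c i : ℂ) * ((Real.sin (x - t i) : ℝ) : ℂ)) := by
      have := (isTP_const 1 (1:ℂ)).add ((isTP_sin (t i)).const_mul (-(c i : ℂ)))
      refine this.congr fun x => ?_
      ring
    have ht1 : IsTP N (fun x => (fun x => ((g i x : ℝ) : ℂ)) x *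
        (1 - (c i : ℂ) * ((Real.sin (x - t i) : ℝ) : ℂ))) :=
      ((hgC i).mul haff).mono (by omega)
    have ht2 : IsTP N (fun x => (fun x => ((g i x : ℝ) : ℂ)) x *
        ((Real.sin (x - t i) : ℝ) : ℂ)) :=
      ((hgC i).mul (isTP_sin (t i))).mono (by omega)
    exact (ht1.const_mul _).add (ht2.const_mul _)
  have hHC : IsTP N (fun x => ((H x : ℝ) : ℂ)) := by
    refine hsum.congr fun x => ?_
    simp only [hHdef]
    push_cast
    ring
  exact hHC.exists_coeffs
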